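/- The stationary density satisfies the self-consistency relations (1/2)·Σ_{ω ∈ {−ω₀, ω₀}} ∫₀^{2π} cos(u)·q(u, ω) du = r and (1/2)·Σ_{ω ∈ {−ω₀, ω₀}} ∫₀^{2π} sin(u)·q(u, ω) du = 0, and consequently ⟨J∗q⟩_μ(θ) = −K·r·sin(θ) for all θ ∈ ℝ. -/

import Mathlib

noncomputable section

open MeasureTheory

/-- `G u ω x = x·cos u + 2ωu`. -/
def G (u ω x : ℝ) : ℝ := x * Real.cos u + 2 * ω * u

/-- The unnormalized stationary profile `S(θ, ω, x)`. -/
def S (θ ω x : ℝ) : ℝ :=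
  Real.exp (G θ ω x) *
    ((1 - Real.exp (4 * Real.pi * ω)) * (∫ u in (0:ℝ)..θ, Real.exp (-(G u ω x))) +
      Real.exp (4 * Real.pi * ω) * (∫ u in (0:ℝ)..(2 * Real.pi), Real.exp (-(G u ω x))))

/-- The normalization constant `Z(ω, x)`. -/
def Z (ω x : ℝ) : ℝ := ∫ θ in (0:ℝ)..(2 * Real.pi), S θ ω x

/-- `Ψ_μ` for the binary disorder law `μ = (1/2)(δ_{-ω₀} + δ_{ω₀})`. -/
def psiMu (ω₀ x : ℝ) : ℝ :=
  (1 / 2) * ((∫ θ in (0:ℝ)..(2 * Real.pi), Real.cos θ * S θ (-ω₀) x) / Z (-ω₀) x +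
    (∫ θ in (0:ℝ)..(2 * Real.pi), Real.cos θ * S θ ω₀ x) / Z ω₀ x)

/-- The stationary density `q(θ, ω) = S(θ, ω, 2Kr)/Z(ω, 2Kr)`. -/
def q (K r θ ω : ℝ) : ℝ := S θ ω (2 * K * r) / Z ω (2 * K * r)

/-- `κ(ω) = (1 − exp(4πω))/(2 Z(ω, 2Kr))`. -/
def kap (K r ω : ℝ) : ℝ := (1 - Real.exp (4 * Real.pi * ω)) / (2 * Z ω (2 * K * r))

/-- The averaged convolution `⟨J∗h⟩_μ(θ)` for binary disorder. -/
def Jconv (K ω₀ : ℝ) (h : ℝ → ℝ → ℝ) (θ : ℝ) : ℝ :=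
  -(K / 2) * ((∫ φ in (0:ℝ)..(2 * Real.pi), Real.sin φ * h (θ - φ) (-ω₀)) +
    (∫ φ in (0:ℝ)..(2 * Real.pi), Real.sin φ * h (θ - φ) ω₀))

/-- The linearized evolution operator `L` around the stationary density `q`. -/
def Lop (K ω₀ r : ℝ) (h : ℝ → ℝ → ℝ) (θ ω : ℝ) : ℝ :=
  (1 / 2) * deriv (deriv (fun u => h u ω)) θ -
    deriv (fun u => h u ω * (Jconv K ω₀ (q K r) u + ω) + q K r u ω * Jconv K ω₀ h u) θ



def F (ω x θ : ℝ) : ℝ := ∫ u in (0:ℝ)..θ, Real.exp (-(G u ω x))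

lemma contG (ω x : ℝ) : Continuous fun u => Real.exp (-(G u ω x)) := by
  unfold G; continuity

lemma Fint (ω x a b : ℝ) : IntervalIntegrable (fun u => Real.exp (-(G u ω x))) volume a b :=
  (contG ω x).intervalIntegrable a b

lemma G_per (u ω x : ℝ) : G (u + 2 * Real.pi) ω x = G u ω x + 4 * Real.pi * ω := by
  unfold G; rw [Real.cos_add_two_pi]; ring

lemma G_neg (u ω x : ℝ) : G (-u) (-ω) x = G u ω x := by
  unfold G; rw [Real.cos_neg]; ring

lemma F_per (ω x θ : ℝ) :
    F ω x (θ + 2 * Real.pi) = F ω x (2 * Real.pi) + Real.exp (-(4 * Real.pi * ω)) * F ω x θ := by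
  have h1 : (∫ u in (0:ℝ)..θ, Real.exp (-(G (u + 2 * Real.pi) ω x)))
      = ∫ u in (2 * Real.pi)..(θ + 2 * Real.pi), Real.exp (-(G u ω x)) := by
    simpa using intervalIntegral.integral_comp_add_right
      (fun u => Real.exp (-(G u ω x))) (2 * Real.pi) (a := 0) (b := θ)
  have h2 : (∫ u in (0:ℝ)..θ, Real.exp (-(G (u + 2 * Real.pi) ω x)))
      = Real.exp (-(4 * Real.pi * ω)) * F ω x θ := by
    rw [show (fun u => Real.exp (-(G (u + 2 * Real.pi) ω x)))
        = fun u => Real.exp (-(4 * Real.pi * ω)) * Real.exp (-(G u ω x)) by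
      funext u; rw [G_per, ← Real.exp_add]; ring_nf]
    exact intervalIntegral.integral_const_mul _ _
  have h3 := intervalIntegral.integral_add_adjacent_intervals
    (Fint ω x 0 (2 * Real.pi)) (Fint ω x (2 * Real.pi) (θ + 2 * Real.pi))
  unfold F
  rw [← h3, ← h1, h2]
  rfl

lemma F_neg (ω x θ : ℝ) : F (-ω) x (-θ) = - F ω x θ := by
  have h1 : (∫ u in (0:ℝ)..θ, Real.exp (-(G (-u) (-ω) x)))
      = ∫ u in (-θ)..(0:ℝ), Real.exp (-(G u (-ω) x)) := by
    simpa using intervalIntegral.integral_comp_neg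
      (fun u => Real.exp (-(G u (-ω) x))) (a := 0) (b := θ)
  have h2 : (∫ u in (0:ℝ)..θ, Real.exp (-(G (-u) (-ω) x))) = F ω x θ := by
    simp only [G_neg]; rfl
  unfold F
  rw [intervalIntegral.integral_symm (-θ) (0:ℝ) (f := fun u => Real.exp (-(G u (-ω) x))), ← h1, h2]
  rfl

lemma F2pi_neg (ω x : ℝ) :
    F (-ω) x (2 * Real.pi) = Real.exp (4 * Real.pi * ω) * F ω x (2 * Real.pi) := by
  have h := F_per (-ω) x (-(2 * Real.pi))
  simp only [neg_add_cancel] at h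
  rw [F_neg ω x (2 * Real.pi)] at h
  have h0 : F (-ω) x 0 = 0 := intervalIntegral.integral_same
  rw [h0] at h
  have : Real.exp (-(4 * Real.pi * -ω)) = Real.exp (4 * Real.pi * ω) := by ring_nf
  rw [this] at h
  linarith


lemma S_eq (θ ω x : ℝ) : S θ ω x = Real.exp (G θ ω x) *
    ((1 - Real.exp (4 * Real.pi * ω)) * F ω x θ +
      Real.exp (4 * Real.pi * ω) * F ω x (2 * Real.pi)) := rfl

lemma exp_mul_exp_neg (c : ℝ) : Real.exp (-c) * Real.exp c = 1 := by
  rw [← Real.exp_add]; simp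

lemma S_neg (θ ω x : ℝ) : S (-θ) (-ω) x = Real.exp (-(4 * Real.pi * ω)) * S θ ω x := by
  rw [S_eq, S_eq, G_neg, F_neg, F2pi_neg]
  have h1 : (4 : ℝ) * Real.pi * -ω = -(4 * Real.pi * ω) := by ring
  rw [h1]
  have h2 := exp_mul_exp_neg (4 * Real.pi * ω)
  set a := Real.exp (-(4 * Real.pi * ω))
  set b := Real.exp (4 * Real.pi * ω)
  set E := Real.exp (G θ ω x)
  set P := F ω x θ
  set Q := F ω x (2 * Real.pi)
  linear_combination (E * P) * h2

lemma S_per (θ ω x : ℝ) : S (θ + 2 * Real.pi) ω x = S θ ω x := by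
  rw [S_eq, S_eq, G_per, F_per, Real.exp_add]
  have h2 := exp_mul_exp_neg (4 * Real.pi * ω)
  set a := Real.exp (-(4 * Real.pi * ω))
  set b := Real.exp (4 * Real.pi * ω)
  set E := Real.exp (G θ ω x)
  set P := F ω x θ
  set Q := F ω x (2 * Real.pi)
  linear_combination (E * P - E * b * P) * h2

lemma contF (ω x : ℝ) : Continuous (F ω x) :=
  intervalIntegral.continuous_primitive (fun a b => Fint ω x a b) 0

lemma contS (ω x : ℝ) : Continuous fun θ => S θ ω x := by
  simp only [S_eq]
  exact ((Real.continuous_exp.comp (by unfold G; continuity)).mul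
    (((continuous_const.mul (contF ω x))).add continuous_const))

lemma S_periodic (ω x : ℝ) : Function.Periodic (fun θ => S θ ω x) (2 * Real.pi) :=
  fun θ => S_per θ ω x

lemma refl_int (g : ℝ → ℝ) (hg : Function.Periodic g (2 * Real.pi)) :
    (∫ θ in (0:ℝ)..(2 * Real.pi), g (-θ)) = ∫ θ in (0:ℝ)..(2 * Real.pi), g θ := by
  have h1 := intervalIntegral.integral_comp_neg g (a := 0) (b := 2 * Real.pi)
  have h2 := hg.intervalIntegral_add_eq (-(2 * Real.pi)) 0
  simp only [neg_add_cancel, zero_add] at h2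
  simp only [neg_zero] at h1
  exact h1.trans h2

lemma shift_int (g : ℝ → ℝ) (hg : Function.Periodic g (2 * Real.pi)) (θ : ℝ) :
    (∫ φ in (0:ℝ)..(2 * Real.pi), g (θ - φ)) = ∫ u in (0:ℝ)..(2 * Real.pi), g u := by
  have h1 := intervalIntegral.integral_comp_sub_left g θ (a := 0) (b := 2 * Real.pi)
  have h2 := hg.intervalIntegral_add_eq (θ - 2 * Real.pi) 0
  simp only [sub_add_cancel, zero_add] at h2
  simp only [sub_zero] at h1
  exact h1.trans h2

lemma S_flip (θ ω x : ℝ) : S θ (-ω) x = Real.exp (-(4 * Real.pi * ω)) * S (-θ) ω x := by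
  have := S_neg (-θ) ω x; rwa [neg_neg] at this

lemma Z_flip (ω x : ℝ) : Z (-ω) x = Real.exp (-(4 * Real.pi * ω)) * Z ω x := by
  unfold Z
  calc (∫ θ in (0:ℝ)..(2 * Real.pi), S θ (-ω) x)
      = ∫ θ in (0:ℝ)..(2 * Real.pi), Real.exp (-(4 * Real.pi * ω)) * (fun u => S u ω x) (-θ) := by
        simp only [S_flip]
    _ = Real.exp (-(4 * Real.pi * ω)) * ∫ θ in (0:ℝ)..(2 * Real.pi), (fun u => S u ω x) (-θ) :=
        intervalIntegral.integral_const_mul _ _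
    _ = Real.exp (-(4 * Real.pi * ω)) * ∫ θ in (0:ℝ)..(2 * Real.pi), S θ ω x := by
        rw [refl_int _ (S_periodic ω x)]

lemma cos_flip (ω x : ℝ) :
    (∫ θ in (0:ℝ)..(2 * Real.pi), Real.cos θ * S θ (-ω) x)
      = Real.exp (-(4 * Real.pi * ω)) * ∫ θ in (0:ℝ)..(2 * Real.pi), Real.cos θ * S θ ω x := by
  have key : (fun θ => Real.cos θ * S θ (-ω) x)
      = fun θ => Real.exp (-(4 * Real.pi * ω)) * ((fun u => Real.cos u * S u ω x) (-θ)) := by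
    funext θ; simp only [S_flip, Real.cos_neg]; ring
  have hper : Function.Periodic (fun u => Real.cos u * S u ω x) (2 * Real.pi) := fun u => by
    simp only [S_per, Real.cos_add_two_pi]
  rw [key, intervalIntegral.integral_const_mul, refl_int _ hper]

lemma sin_flip (ω x : ℝ) :
    (∫ θ in (0:ℝ)..(2 * Real.pi), Real.sin θ * S θ (-ω) x)
      = -(Real.exp (-(4 * Real.pi * ω)) * ∫ θ in (0:ℝ)..(2 * Real.pi), Real.sin θ * S θ ω x) := by
  have key : (fun θ => Real.sin θ * S θ (-ω) x)
      = fun θ => -(Real.exp (-(4 * Real.pi * ω)) * ((fun u => Real.sin u * S u ω x) (-θ))) := by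
    funext θ; simp only [S_flip, Real.sin_neg]; ring
  have hper : Function.Periodic (fun u => Real.sin u * S u ω x) (2 * Real.pi) := fun u => by
    simp only [S_per, Real.sin_add_two_pi]
  rw [key, intervalIntegral.integral_neg, intervalIntegral.integral_const_mul, refl_int _ hper]

/-- Self-consistency of the stationary density: the averaged cosine integral equals `r`,
the averaged sine integral vanishes, and the averaged convolution is `−K r sin`. -/
theorem stmt3 (K ω₀ r : ℝ) (hK : 0 < K) (hω₀ : 0 < ω₀) (hr : 0 < r)
    (hfix : r = psiMu ω₀ (2 * K * r)) :
    ((1 / 2) * ((∫ u in (0:ℝ)..(2 * Real.pi), Real.cos u * q K r u (-ω₀)) +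
        (∫ u in (0:ℝ)..(2 * Real.pi), Real.cos u * q K r u ω₀)) = r) ∧
      ((1 / 2) * ((∫ u in (0:ℝ)..(2 * Real.pi), Real.sin u * q K r u (-ω₀)) +
        (∫ u in (0:ℝ)..(2 * Real.pi), Real.sin u * q K r u ω₀)) = 0) ∧
      ∀ θ : ℝ, Jconv K ω₀ (q K r) θ = -(K * r * Real.sin θ) := by
  have hq : ∀ ω u, Real.cos u * q K r u ω = (Real.cos u * S u ω (2*K*r)) / Z ω (2*K*r) := by
    intro ω u; rw [q]; ring
  have hqs : ∀ ω u, Real.sin u * q K r u ω = (Real.sin u * S u ω (2*K*r)) / Z ω (2*K*r) := by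
    intro ω u; rw [q]; ring
  have hIc : ∀ ω, (∫ u in (0:ℝ)..(2*Real.pi), Real.cos u * q K r u ω)
      = (∫ u in (0:ℝ)..(2*Real.pi), Real.cos u * S u ω (2*K*r)) / Z ω (2*K*r) := by
    intro ω; simp only [hq]; exact intervalIntegral.integral_div _ _
  have hIs : ∀ ω, (∫ u in (0:ℝ)..(2*Real.pi), Real.sin u * q K r u ω)
      = (∫ u in (0:ℝ)..(2*Real.pi), Real.sin u * S u ω (2*K*r)) / Z ω (2*K*r) := by
    intro ω; simp only [hqs]; exact intervalIntegral.integral_div _ _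
  have claim1 : (1 / 2) * ((∫ u in (0:ℝ)..(2 * Real.pi), Real.cos u * q K r u (-ω₀)) +
      (∫ u in (0:ℝ)..(2 * Real.pi), Real.cos u * q K r u ω₀)) = r := by
    rw [hIc, hIc]; exact hfix.symm
  have hflip : (∫ u in (0:ℝ)..(2*Real.pi), Real.sin u * q K r u (-ω₀))
      = -(∫ u in (0:ℝ)..(2*Real.pi), Real.sin u * q K r u ω₀) := by
    rw [hIs, hIs, sin_flip ω₀ (2*K*r), Z_flip ω₀ (2*K*r), neg_div,
      mul_div_mul_left _ _ (Real.exp_ne_zero _)]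
  have claim2 : (1 / 2) * ((∫ u in (0:ℝ)..(2 * Real.pi), Real.sin u * q K r u (-ω₀)) +
      (∫ u in (0:ℝ)..(2 * Real.pi), Real.sin u * q K r u ω₀)) = 0 := by
    rw [hflip]; ring
  refine ⟨claim1, claim2, ?_⟩
  intro θ
  have contq : ∀ ω, Continuous (fun u => q K r u ω) := fun ω => (contS ω (2*K*r)).div_const _
  have qper : ∀ ω u, q K r (u + 2*Real.pi) ω = q K r u ω := by
    intro ω u; unfold q; rw [S_per]
  have key : ∀ ω, (∫ φ in (0:ℝ)..(2*Real.pi), Real.sin φ * q K r (θ - φ) ω)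
      = Real.sin θ * (∫ u in (0:ℝ)..(2*Real.pi), Real.cos u * q K r u ω)
        - Real.cos θ * (∫ u in (0:ℝ)..(2*Real.pi), Real.sin u * q K r u ω) := by
    intro ω
    have hg : Function.Periodic (fun u => Real.sin (θ - u) * q K r u ω) (2 * Real.pi) := by
      intro u
      show Real.sin (θ - (u + 2 * Real.pi)) * q K r (u + 2 * Real.pi) ω
        = Real.sin (θ - u) * q K r u ω
      rw [qper, show θ - (u + 2 * Real.pi) = (θ - u) - 2 * Real.pi by ring,
        Real.sin_sub_two_pi]
    have h1 : (fun φ => Real.sin φ * q K r (θ - φ) ω)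
        = fun φ => (fun u => Real.sin (θ - u) * q K r u ω) (θ - φ) := by
      funext φ; simp [sub_sub_cancel]
    rw [h1, shift_int _ hg θ]
    have h2 : (fun u => Real.sin (θ - u) * q K r u ω)
        = fun u => Real.sin θ * (Real.cos u * q K r u ω)
            - Real.cos θ * (Real.sin u * q K r u ω) := by
      funext u; rw [Real.sin_sub]; ring
    rw [h2, intervalIntegral.integral_sub (f := fun u => Real.sin θ * (Real.cos u * q K r u ω))
        (g := fun u => Real.cos θ * (Real.sin u * q K r u ω))
        ((continuous_const.mul (Real.continuous_cos.mul (contq ω))).intervalIntegrable _ _)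
        ((continuous_const.mul (Real.continuous_sin.mul (contq ω))).intervalIntegrable _ _),
      intervalIntegral.integral_const_mul, intervalIntegral.integral_const_mul]
  have hJ : Jconv K ω₀ (q K r) θ = -(K / 2) *
      ((∫ φ in (0:ℝ)..(2*Real.pi), Real.sin φ * q K r (θ - φ) (-ω₀)) +
        (∫ φ in (0:ℝ)..(2*Real.pi), Real.sin φ * q K r (θ - φ) ω₀)) := rfl
  rw [hJ, key, key]
  linear_combination (-(K * Real.sin θ)) * claim1 + (K * Real.cos θ) * claim2
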